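/- Let n > t ≥ 1 and suppose each of X_0 + w, X_1 + w, ..., X_{t-1} + w is a sum of n, n−1, ..., n−t+1 terms respectively, each term at least 1, and 1 ≤ w ≤ e^m. Then w · Σ_{s=0}^{t-1} 1/(X_s + w) ≤ e^m · ln( n/(n−t) ). Consequently, if e^m ln(n/(n−t)) < 1, the function w ↦ w/∏_{s=0}^{t-1}(X_s+w) is increasing at w. -/

import Mathlib

open Finset

theorem stmt15 (n t : ℕ) (ht : 1 ≤ t) (hnt : t < n)
    (X : Fin t → ℝ) (m w : ℝ)
    (hsum : ∀ s : Fin t, ((n : ℝ) - s) ≤ X s + w)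
    (hw1 : 1 ≤ w) (hwm : w ≤ Real.exp m) :
    w * ∑ s : Fin t, 1 / (X s + w) ≤ Real.exp m * Real.log ((n : ℝ) / (n - t)) ∧
    (Real.exp m * Real.log ((n : ℝ) / (n - t)) < 1 →
      0 < deriv (fun v : ℝ => v / ∏ s, (X s + v)) w) := by
  have hn0 : (0:ℝ) < n := by
    have : 0 < n := lt_of_le_of_lt (Nat.zero_le t) hnt
    exact_mod_cast this
  have hnt' : (0:ℝ) < (n:ℝ) - t := by
    have : (t:ℝ) < n := by exact_mod_cast hnt
    linarith
  have hpos : ∀ s : Fin t, (0:ℝ) < X s + w := by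
    intro s
    have hs : (s:ℝ) < t := by exact_mod_cast s.2
    have ht' : (t:ℝ) ≤ n := by exact_mod_cast hnt.le
    have := hsum s
    linarith
  -- key sum bound
  have hterm : ∀ s : Fin t, 1 / (X s + w) ≤
      Real.log ((n:ℝ) - s) - Real.log ((n:ℝ) - (s+1)) := by
    intro s
    have hs : (s:ℝ) + 1 ≤ t := by exact_mod_cast s.2
    have ht' : (t:ℝ) ≤ n := by exact_mod_cast hnt.le
    have h1 : (0:ℝ) < (n:ℝ) - (s+1) := by linarith
    have h2 : (0:ℝ) < (n:ℝ) - s := by linarith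
    have h3 : 1 / (X s + w) ≤ 1 / ((n:ℝ) - s) :=
      one_div_le_one_div_of_le h2 (hsum s)
    have h4 : Real.log (((n:ℝ) - (s+1)) / ((n:ℝ) - s)) ≤
        ((n:ℝ) - (s+1)) / ((n:ℝ) - s) - 1 :=
      Real.log_le_sub_one_of_pos (by positivity)
    have h5 : ((n:ℝ) - (s+1)) / ((n:ℝ) - s) - 1 = -(1 / ((n:ℝ) - s)) := by
      field_simp
      ring
    rw [Real.log_div (by linarith) (by linarith), h5] at h4
    linarith
  have hsumlog : ∑ s : Fin t, 1 / (X s + w) ≤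
      Real.log n - Real.log ((n:ℝ) - t) := by
    have htel := Finset.sum_range_sub' (fun i => Real.log ((n:ℝ) - i)) t
    push_cast at htel
    calc ∑ s : Fin t, 1 / (X s + w)
        ≤ ∑ s : Fin t, (Real.log ((n:ℝ) - s) - Real.log ((n:ℝ) - (s+1))) :=
          Finset.sum_le_sum fun s _ => hterm s
      _ = ∑ i ∈ Finset.range t,
            (Real.log ((n:ℝ) - i) - Real.log ((n:ℝ) - (i+1))) := by
          rw [Finset.sum_range fun i => (Real.log ((n:ℝ) - i) - Real.log ((n:ℝ) - (i+1)))]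
      _ = Real.log n - Real.log ((n:ℝ) - t) := by rw [htel]; norm_num
  have hlogdiv : Real.log ((n:ℝ) / (n - t)) = Real.log n - Real.log ((n:ℝ) - t) :=
    Real.log_div (ne_of_gt hn0) (ne_of_gt hnt')
  have hSnonneg : 0 ≤ ∑ s : Fin t, 1 / (X s + w) :=
    Finset.sum_nonneg fun s _ => (one_div_pos.mpr (hpos s)).le
  have h1 : w * ∑ s : Fin t, 1 / (X s + w) ≤ Real.exp m * Real.log ((n:ℝ) / (n - t)) := by
    rw [hlogdiv]
    exact mul_le_mul hwm hsumlog hSnonneg (Real.exp_pos m).le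
  refine ⟨h1, fun hlt => ?_⟩
  have hwS : w * ∑ s : Fin t, 1 / (X s + w) < 1 := lt_of_le_of_lt h1 hlt
  -- derivative computation
  have hprod : HasDerivAt (fun v : ℝ => ∏ s : Fin t, (X s + v))
      (∑ s : Fin t, ∏ j ∈ Finset.univ.erase s, (X j + w)) w := by
    have := HasDerivAt.finset_prod (u := (Finset.univ : Finset (Fin t)))
      (f := fun s v => X s + v) (f' := fun _ => (1:ℝ)) (x := w)
      (fun i _ => (hasDerivAt_id w).const_add (X i))
    rw [Finset.prod_fn] at this
    simpa using this
  have hP : (0:ℝ) < ∏ s : Fin t, (X s + w) :=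
    Finset.prod_pos fun s _ => hpos s
  have hdiv : HasDerivAt (fun v : ℝ => v / ∏ s : Fin t, (X s + v))
      ((1 * (∏ s : Fin t, (X s + w)) -
        w * ∑ s : Fin t, ∏ j ∈ Finset.univ.erase s, (X j + w)) /
        (∏ s : Fin t, (X s + w))^2) w :=
    (hasDerivAt_id w).div hprod (ne_of_gt hP)
  rw [hdiv.deriv]
  have herase : ∀ s : Fin t, (∏ j ∈ Finset.univ.erase s, (X j + w))
      = (∏ j : Fin t, (X j + w)) * (1 / (X s + w)) := by
    intro s
    have h := Finset.prod_erase_mul Finset.univ (fun j => X j + w) (Finset.mem_univ s)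
    rw [mul_one_div, eq_div_iff (ne_of_gt (hpos s))]
    simpa using h
  have hsum' : ∑ s : Fin t, ∏ j ∈ Finset.univ.erase s, (X j + w)
      = (∏ j : Fin t, (X j + w)) * ∑ s : Fin t, 1 / (X s + w) := by
    rw [Finset.mul_sum]
    exact Finset.sum_congr rfl fun s _ => herase s
  rw [hsum']
  have hnum : 0 < 1 * (∏ s : Fin t, (X s + w)) -
      w * ((∏ j : Fin t, (X j + w)) * ∑ s : Fin t, 1 / (X s + w)) := by
    have : w * ((∏ j : Fin t, (X j + w)) * ∑ s : Fin t, 1 / (X s + w))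
        = (∏ j : Fin t, (X j + w)) * (w * ∑ s : Fin t, 1 / (X s + w)) := by ring
    rw [this, one_mul]
    nlinarith [hwS, hP]
  positivity
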